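/- Let (M, μ) be a σ-finite measure space and n ≥ 1. For all measurable sets A ⊆ B ⊆ M × ℝⁿ, the Steiner symmetrizations satisfy (μ ⊗ vol)(B* \ A*) ≤ (μ ⊗ vol)(B \ A). -/

import Mathlib

open MeasureTheory Metric
open scoped RealInnerProductSpace ENNReal

noncomputable section

/-- Steiner symmetrization (with respect to `M`) of a subset of `M × ℝⁿ`:
each slice over `x ∈ M` is replaced by the open ball centered at `0` with the same
Lebesgue measure as the slice `U_x`. -/
def steinerSet {M : Type*} {n : ℕ} (U : Set (M × EuclideanSpace ℝ (Fin n))) :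
    Set (M × EuclideanSpace ℝ (Fin n)) :=
  {z | volume (ball (0 : EuclideanSpace ℝ (Fin n)) ‖z.2‖) < volume {y' | (z.1, y') ∈ U}}

/-- Steiner symmetrization (with respect to `M`) of a function `u : M × ℝⁿ → ℝ`:
`u*(x, y) = sup ({0} ∪ {c > 0 : vol (ball 0 ‖y‖) < vol {y' : u (x, y') > c}})`. -/
def steiner {M : Type*} {n : ℕ} (u : M × EuclideanSpace ℝ (Fin n) → ℝ)
    (z : M × EuclideanSpace ℝ (Fin n)) : ℝ :=
  sSup ({0} ∪ {c : ℝ | 0 < c ∧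
    volume (ball (0 : EuclideanSpace ℝ (Fin n)) ‖z.2‖) < volume {y' | c < u (z.1, y')}})

/-- The norm-of-ball-volume function is measurable. -/
lemma measurable_volBall {n : ℕ} :
    Measurable (fun y : EuclideanSpace ℝ (Fin n) =>
      volume (ball (0 : EuclideanSpace ℝ (Fin n)) ‖y‖)) := by
  have hmono : Monotone (fun r : ℝ => volume (ball (0 : EuclideanSpace ℝ (Fin n)) r)) :=
    fun a b hab => measure_mono (ball_subset_ball hab)
  exact hmono.measurable.comp measurable_norm

/-- The superlevel set of the ball-volume function with threshold `r` has volume `r`. -/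
lemma vol_volBall_lt {n : ℕ} (hn : 1 ≤ n) (r : ℝ≥0∞) :
    volume {y : EuclideanSpace ℝ (Fin n) |
      volume (ball (0 : EuclideanSpace ℝ (Fin n)) ‖y‖) < r} = r := by
  set E := EuclideanSpace ℝ (Fin n)
  have hfr : Module.finrank ℝ E = n := finrank_euclideanSpace_fin
  have hnt : Nontrivial E := by
    apply Module.nontrivial_of_finrank_pos (R := ℝ)
    rw [hfr]; omega
  set c := volume (ball (0 : E) 1) with hc
  have hc0 : c ≠ 0 := (measure_ball_pos _ _ one_pos).ne'
  have hctop : c ≠ ∞ := measure_ball_lt_top.ne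
  rcases eq_or_ne r ∞ with rfl | hr
  · have : {y : E | volume (ball (0 : E) ‖y‖) < ∞} = Set.univ := by
      ext y; simp [measure_ball_lt_top]
    rw [this]
    exact measure_univ_of_isAddLeftInvariant volume
  · set s : ℝ := (r.toReal / c.toReal) ^ (n⁻¹ : ℝ) with hs
    have hs0 : 0 ≤ s := Real.rpow_nonneg (div_nonneg ENNReal.toReal_nonneg ENNReal.toReal_nonneg) _
    have hsn : s ^ n = r.toReal / c.toReal := by
      rw [hs, ← Real.rpow_natCast (_ ^ _) n, ← Real.rpow_mul
        (div_nonneg ENNReal.toReal_nonneg ENNReal.toReal_nonneg)]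
      rw [inv_mul_cancel₀ (by positivity : (n : ℝ) ≠ 0), Real.rpow_one]
    have hrs : ENNReal.ofReal (s ^ n) * c = r := by
      rw [hsn, ENNReal.ofReal_div_of_pos (ENNReal.toReal_pos hc0 hctop),
        ENNReal.ofReal_toReal hr, ENNReal.ofReal_toReal hctop,
        ENNReal.div_mul_cancel hc0 hctop]
    have hset : {y : E | volume (ball (0 : E) ‖y‖) < r} = ball (0 : E) s := by
      ext y
      rw [Set.mem_setOf_eq, mem_ball, dist_zero_right, ← hrs,
        Measure.addHaar_ball volume _ (norm_nonneg y), hfr,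
        ENNReal.mul_lt_mul_iff_left hc0 hctop,
        ENNReal.ofReal_lt_ofReal_iff_of_nonneg (by positivity)]
      exact pow_lt_pow_iff_left₀ (norm_nonneg y) hs0 (by omega)
    rw [hset, Measure.addHaar_ball volume _ hs0, hfr, hrs]

lemma measurableSet_steinerSet {M : Type*} [MeasurableSpace M] {n : ℕ}
    {U : Set (M × EuclideanSpace ℝ (Fin n))} (hU : MeasurableSet U) :
    MeasurableSet (steinerSet U) := by
  apply measurableSet_lt
  · exact measurable_volBall.comp measurable_snd
  · exact (measurable_measure_prodMk_left hU).comp measurable_fst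

/-- Steiner symmetrization does not increase the measure of set differences. -/
theorem stmt_4 {M : Type*} [MeasurableSpace M] (μ : Measure M) [SigmaFinite μ]
    {n : ℕ} (hn : 1 ≤ n)
    (A B : Set (M × EuclideanSpace ℝ (Fin n)))
    (hA : MeasurableSet A) (hB : MeasurableSet B) (hAB : A ⊆ B) :
    (μ.prod volume) (steinerSet B \ steinerSet A) ≤ (μ.prod volume) (B \ A) := by
  rw [Measure.prod_apply ((measurableSet_steinerSet hB).diff (measurableSet_steinerSet hA)),
    Measure.prod_apply (hB.diff hA)]
  apply lintegral_mono
  intro x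
  simp only []
  set a := volume (Prod.mk x ⁻¹' A) with ha
  set b := volume (Prod.mk x ⁻¹' B) with hb
  have hab : a ≤ b := measure_mono (Set.preimage_mono hAB)
  have hpre : ∀ (U : Set (M × EuclideanSpace ℝ (Fin n))),
      Prod.mk x ⁻¹' steinerSet U
        = {y : EuclideanSpace ℝ (Fin n) | volume (ball (0 : EuclideanSpace ℝ (Fin n)) ‖y‖) < volume (Prod.mk x ⁻¹' U)} := by
    intro U; rfl
  rw [Set.preimage_diff, hpre A, hpre B]
  rcases eq_or_ne a ∞ with hatop | hatop
  · have hbtop : b = ∞ := top_le_iff.mp (hatop ▸ hab)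
    have : {y : EuclideanSpace ℝ (Fin n) | volume (ball (0 : EuclideanSpace ℝ (Fin n)) ‖y‖) < b}
        \ {y : EuclideanSpace ℝ (Fin n) | volume (ball (0 : EuclideanSpace ℝ (Fin n)) ‖y‖) < a} = ∅ := by
      rw [Set.diff_eq_empty]
      intro y hy
      simp only [Set.mem_setOf_eq] at hy ⊢
      rw [hatop]; rw [hbtop] at hy; exact hy
    rw [this]; simp
  · have hsub : {y : EuclideanSpace ℝ (Fin n) | volume (ball (0 : EuclideanSpace ℝ (Fin n)) ‖y‖) < a}
        ⊆ {y : EuclideanSpace ℝ (Fin n) | volume (ball (0 : EuclideanSpace ℝ (Fin n)) ‖y‖) < b} :=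
      fun y hy => lt_of_lt_of_le hy hab
    have hmeasA : MeasurableSet {y : EuclideanSpace ℝ (Fin n) | volume (ball (0 : EuclideanSpace ℝ (Fin n)) ‖y‖) < a} :=
      measurable_volBall measurableSet_Iio
    rw [measure_diff hsub hmeasA.nullMeasurableSet
      (by rw [vol_volBall_lt hn]; exact hatop), vol_volBall_lt hn, vol_volBall_lt hn]
    calc b - a = volume (Prod.mk x ⁻¹' B) - volume (Prod.mk x ⁻¹' A) := rfl
    _ ≤ volume (Prod.mk x ⁻¹' B \ Prod.mk x ⁻¹' A) := le_measure_diff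
    _ = volume (Prod.mk x ⁻¹' (B \ A)) := by rw [Set.preimage_diff]
end
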